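/- Let Y be the symmetric simple random walk (steps ±1 with probability 1/2 each) and let V_k denote the first hitting time of level k. Then, with P_2 denoting the law of the walk started at Y_0 = 2, lim_{m→∞} P_2(V_1 < m | V_0 > m) = 1/2. -/

import Mathlib

open MeasureTheory ProbabilityTheory Filter Topology Finset
open scoped ENNReal

namespace TASEP

/-- The step distribution of the random walk: `-1` with probability `p` and `+1` with
probability `1 - p`. -/
noncomputable def stepLaw (p : ℝ) : Measure ℤ :=
  ENNReal.ofReal p • Measure.dirac (-1) + ENNReal.ofReal (1 - p) • Measure.dirac 1

/-- The random walk started at `x` with increments `X 0, X 1, …`. -/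
def walkFrom {Ω : Type*} (x : ℤ) (X : ℕ → Ω → ℤ) (k : ℕ) (ω : Ω) : ℤ :=
  x + ∑ i ∈ Finset.range k, X i ω

/-- The first hitting time `V_lvl = min {k ≥ 0 : Y k = lvl} ∈ ℕ∞` of the level `lvl`
by the walk `Y` (equal to `∞` if the level is never visited). -/
noncomputable def hitTime {Ω : Type*} (Y : ℕ → Ω → ℤ) (lvl : ℤ) (ω : Ω) : ℕ∞ :=
  sInf ((fun k : ℕ => (k : ℕ∞)) '' {k : ℕ | Y k ω = lvl})

/-- ±1 steps read off from a Boolean pattern. -/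
def stepsOf {n : ℕ} (s : Fin n → Bool) (i : ℕ) : ℤ :=
  if h : i < n then (if s ⟨i, h⟩ then 1 else -1) else 0

/-- number of Boolean patterns of length `n` satisfying `p`. -/
noncomputable def cnt (n : ℕ) (p : (Fin n → Bool) → Prop) : ℕ :=
  {s | p s}.ncard

lemma cnt_congr {n : ℕ} {p q : (Fin n → Bool) → Prop} (h : ∀ s, p s ↔ q s) :
    cnt n p = cnt n q := by
  unfold cnt; congr 1; ext s; exact h s

lemma cnt_of_forall {n : ℕ} {p : (Fin n → Bool) → Prop} (h : ∀ s, p s) :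
    cnt n p = 2 ^ n := by
  unfold cnt
  have h2 : {s | p s} = Set.univ := by ext s; simp [h s]
  rw [h2, Set.ncard_univ, Nat.card_eq_fintype_card]
  simp

lemma cnt_of_forall_not {n : ℕ} {p : (Fin n → Bool) → Prop} (h : ∀ s, ¬ p s) :
    cnt n p = 0 := by
  unfold cnt
  have h2 : {s | p s} = ∅ := by ext s; simp [h s]
  simp [h2]

lemma cnt_or {n : ℕ} {p q : (Fin n → Bool) → Prop} (h : ∀ s, ¬ (p s ∧ q s)) :
    cnt n (fun s => p s ∨ q s) = cnt n p + cnt n q := by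
  unfold cnt
  have hu : {s | p s ∨ q s} = {s | p s} ∪ {s | q s} := by ext s; simp
  rw [hu, Set.ncard_union_eq]
  · rw [Set.disjoint_left]
    intro s hp hq
    exact h s ⟨hp, hq⟩

lemma cnt_cons {n : ℕ} (p : (Fin (n + 1) → Bool) → Prop) :
    cnt (n + 1) p = cnt n (fun t => p (Fin.cons true t)) + cnt n (fun t => p (Fin.cons false t)) := by
  unfold cnt
  have hinj : ∀ b : Bool, Function.Injective
      (fun t : Fin n → Bool => (Fin.cons b t : Fin (n + 1) → Bool)) := by
    intro b t1 t2 h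
    have := congrArg Fin.tail h
    simpa [Fin.tail_cons] using this
  have hu : {s | p s} =
      ((fun t : Fin n → Bool => (Fin.cons true t : Fin (n + 1) → Bool)) ''
        {t | p (Fin.cons true t)}) ∪
      ((fun t : Fin n → Bool => (Fin.cons false t : Fin (n + 1) → Bool)) ''
        {t | p (Fin.cons false t)}) := by
    ext s
    constructor
    · intro hs
      rcases Bool.eq_false_or_eq_true (s 0) with h0 | h0
      · left
        refine ⟨Fin.tail s, ?_, ?_⟩
        · show p _
          rw [← h0, Fin.cons_self_tail]; exact hs
        · rw [← h0]
          exact Fin.cons_self_tail s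
      · right
        refine ⟨Fin.tail s, ?_, ?_⟩
        · show p _
          rw [← h0, Fin.cons_self_tail]; exact hs
        · rw [← h0]
          exact Fin.cons_self_tail s
    · rintro (⟨t, ht, rfl⟩ | ⟨t, ht, rfl⟩) <;> exact ht
  rw [hu, Set.ncard_union_eq, Set.ncard_image_of_injective _ (hinj true),
    Set.ncard_image_of_injective _ (hinj false)]
  · rw [Set.disjoint_left]
    rintro s ⟨t, _, rfl⟩ ⟨t', _, h⟩
    have := congrFun h 0
    simp [Fin.cons_zero] at this

lemma stepsOf_cons_zero {n : ℕ} (b : Bool) (t : Fin n → Bool) :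
    stepsOf (Fin.cons b t) 0 = (if b then 1 else -1) := by
  simp [stepsOf]

lemma stepsOf_cons_succ {n : ℕ} (b : Bool) (t : Fin n → Bool) (i : ℕ) :
    stepsOf (Fin.cons b t) (i + 1) = stepsOf t i := by
  unfold stepsOf
  by_cases h : i < n
  · rw [dif_pos (Nat.succ_lt_succ h), dif_pos h]
    congr 1
  · rw [dif_neg (fun hh => h (Nat.lt_of_succ_lt_succ hh)), dif_neg h]

lemma sum_stepsOf_cons {n : ℕ} (b : Bool) (t : Fin n → Bool) (k : ℕ) :
    ∑ i ∈ range (k + 1), stepsOf (Fin.cons b t) i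
      = (if b then 1 else -1) + ∑ i ∈ range k, stepsOf t i := by
  rw [Finset.sum_range_succ']
  simp only [stepsOf_cons_succ, stepsOf_cons_zero]
  ring

/-- walk from `x` (with the given ±1 steps) stays `≥ 0` for all times `≤ n`. -/
def walkPred (x : ℕ) {n : ℕ} (s : Fin n → Bool) : Prop :=
  ∀ k ≤ n, 0 ≤ (x : ℤ) + ∑ i ∈ range k, stepsOf s i

noncomputable def gcount (x n : ℕ) : ℕ := cnt n (fun s => walkPred x s)

def total {n : ℕ} (s : Fin n → Bool) : ℤ := ∑ i ∈ range n, stepsOf s i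

noncomputable def icount (a b : ℤ) (n : ℕ) : ℕ :=
  cnt n (fun s => a ≤ total s ∧ total s ≤ b)

lemma icount_congr {a b a' b' : ℤ} {n : ℕ} (ha : a = a') (hb : b = b') :
    icount a b n = icount a' b' n := by rw [ha, hb]

lemma total_cons {n : ℕ} (b : Bool) (t : Fin n → Bool) :
    total (Fin.cons b t) = (if b then 1 else -1) + total t := by
  unfold total
  exact sum_stepsOf_cons b t n

lemma walkPred_cons {x : ℕ} {n : ℕ} (b : Bool) (t : Fin n → Bool) :
    walkPred x (Fin.cons b t) ↔
      ∀ k ≤ n, 0 ≤ (x : ℤ) + (if b then 1 else -1) + ∑ i ∈ range k, stepsOf t i := by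
  constructor
  · intro h k hk
    have h2 := h (k + 1) (Nat.succ_le_succ hk)
    rw [sum_stepsOf_cons] at h2
    linarith
  · intro h k hk
    cases k with
    | zero =>
      simp only [Finset.range_zero, Finset.sum_empty, add_zero]
      positivity
    | succ j =>
      rw [sum_stepsOf_cons]
      have h2 := h j (Nat.le_of_succ_le_succ hk)
      linarith

lemma gcount_zero_succ (n : ℕ) : gcount 0 (n + 1) = gcount 1 n := by
  unfold gcount
  rw [cnt_cons]
  have h1 : cnt n (fun t => walkPred 0 (Fin.cons true t)) = cnt n (fun s => walkPred 1 s) := by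
    apply cnt_congr
    intro t
    rw [walkPred_cons]
    unfold walkPred
    constructor
    · intro h k hk; have h2 := h k hk; norm_num at h2 ⊢; linarith
    · intro h k hk; have h2 := h k hk; norm_num at h2 ⊢; linarith
  have h2 : cnt n (fun t => walkPred 0 (Fin.cons false t)) = 0 := by
    apply cnt_of_forall_not
    intro t ht
    rw [walkPred_cons] at ht
    have h3 := ht 0 (Nat.zero_le n)
    norm_num at h3
  rw [h1, h2]
  omega

lemma gcount_succ_succ (x n : ℕ) : gcount (x + 1) (n + 1) = gcount (x + 2) n + gcount x n := by
  unfold gcount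
  rw [cnt_cons]
  congr 1
  · apply cnt_congr
    intro t
    rw [walkPred_cons]
    unfold walkPred
    constructor
    · intro h k hk; have h2 := h k hk; norm_num at h2 ⊢; push_cast at h2 ⊢; linarith
    · intro h k hk; have h2 := h k hk; norm_num at h2 ⊢; push_cast at h2 ⊢; linarith
  · apply cnt_congr
    intro t
    rw [walkPred_cons]
    unfold walkPred
    constructor
    · intro h k hk; have h2 := h k hk; norm_num at h2 ⊢; push_cast at h2 ⊢; linarith
    · intro h k hk; have h2 := h k hk; norm_num at h2 ⊢; push_cast at h2 ⊢; linarith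

lemma icount_succ (a b : ℤ) (n : ℕ) :
    icount a b (n + 1) = icount (a - 1) (b - 1) n + icount (a + 1) (b + 1) n := by
  unfold icount
  rw [cnt_cons]
  congr 1
  · apply cnt_congr
    intro t
    rw [total_cons]
    norm_num
    constructor <;> (intro h; constructor <;> linarith [h.1, h.2])
  · apply cnt_congr
    intro t
    rw [total_cons]
    norm_num
    constructor <;> (intro h; constructor <;> linarith [h.1, h.2])

lemma icount_split {a c : ℤ} (b : ℤ) (h1 : a ≤ b + 1) (h2 : b ≤ c) (n : ℕ) :
    icount a c n = icount a b n + icount (b + 1) c n := by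
  unfold icount
  rw [← cnt_or (fun s h => by omega)]
  apply cnt_congr
  intro s
  omega

lemma gcount_eq_icount : ∀ n x, gcount x n = icount (-(x : ℤ)) ((x : ℤ) + 1) n := by
  intro n
  induction n with
  | zero =>
    intro x
    have h1 : gcount x 0 = 2 ^ 0 := cnt_of_forall (fun s k hk => by
      interval_cases k
      simpa using Int.natCast_nonneg x)
    have h2 : icount (-(x : ℤ)) ((x : ℤ) + 1) 0 = 2 ^ 0 := cnt_of_forall (fun s => by
      have ht : total s = 0 := by simp [total]
      constructor <;> rw [ht] <;> [simp; positivity])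
    rw [h1, h2]
  | succ n ih =>
    intro x
    cases x with
    | zero =>
      rw [gcount_zero_succ, ih 1]
      push_cast
      rw [neg_zero]
      have hrec : icount 0 1 (n + 1) = icount (-1) 0 n + icount 1 2 n := by
        rw [icount_succ]
        rw [icount_congr (a' := (-1:ℤ)) (b' := (0:ℤ)) (by norm_num) (by norm_num),
          icount_congr (a := (0:ℤ)+1) (a' := (1:ℤ)) (b := (1:ℤ)+1) (b' := (2:ℤ))
            (by norm_num) (by norm_num)]
      have hsplit : icount (-1) 2 n = icount (-1) 0 n + icount 1 2 n := by
        rw [icount_split (a := (-1:ℤ)) (c := (2:ℤ)) 0 (by norm_num) (by norm_num) n]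
        norm_num
      rw [hrec, hsplit]
    | succ x =>
      rw [gcount_succ_succ, ih (x + 2), ih x]
      push_cast
      set y : ℤ := (x : ℤ) with hy
      have hy0 : 0 ≤ y := Int.natCast_nonneg x
      have hrec := icount_succ (-(y + 1)) (y + 1 + 1) n
      rw [hrec, show (-(y+1)-1 : ℤ) = -(y+2) from by ring,
        show (y+1+1-1 : ℤ) = y+1 from by ring,
        show (-(y+1)+1 : ℤ) = -y from by ring,
        show (y+1+1+1 : ℤ) = y+3 from by ring,
        show (y+2+1 : ℤ) = y+3 from by ring]
      have e1 : icount (-(y+2)) (y+3) n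
          = icount (-(y+2)) (-(y+1)) n + icount (-y) (y+3) n := by
        rw [icount_split (a := -(y+2)) (c := y+3) (-(y+1)) (by omega) (by omega) n,
          show (-(y+1)+1 : ℤ) = -y from by ring]
      have e2 : icount (-(y+2)) (y+1) n
          = icount (-(y+2)) (-(y+1)) n + icount (-y) (y+1) n := by
        rw [icount_split (a := -(y+2)) (c := y+1) (-(y+1)) (by omega) (by omega) n,
          show (-(y+1)+1 : ℤ) = -y from by ring]
      omega

lemma total_eq_card {n : ℕ} (s : Fin n → Bool) :
    total s = 2 * ((Finset.univ.filter fun i => s i = true).card : ℤ) - n := by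
  unfold total
  rw [← Fin.sum_univ_eq_sum_range (fun i => stepsOf s i) n]
  have h1 : ∀ i : Fin n, stepsOf s i = (if s i = true then (2:ℤ) else 0) - 1 := by
    intro i
    unfold stepsOf
    rw [dif_pos i.isLt]
    have : s ⟨(i : ℕ), i.isLt⟩ = s i := rfl
    rw [this]
    cases s i <;> simp
  rw [Finset.sum_congr rfl (fun i _ => h1 i)]
  rw [Finset.sum_sub_distrib, ← Finset.sum_filter (fun i => s i = true) (fun _ => (2:ℤ))]
  simp [Finset.sum_const, mul_comm]

lemma cnt_card_eq (n c : ℕ) :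
    cnt n (fun s => (Finset.univ.filter fun i => s i = true).card = c) = n.choose c := by
  unfold cnt
  rw [← Nat.card_coe_set_eq]
  have e : {s : Fin n → Bool | (Finset.univ.filter fun i => s i = true).card = c} ≃
      {A : Finset (Fin n) // A.card = c} := by
    refine ⟨fun s => ⟨Finset.univ.filter fun i => s.1 i = true, s.2⟩,
      fun A => ⟨fun i => decide (i ∈ A.1), ?_⟩, ?_, ?_⟩
    · show (Finset.univ.filter fun i => decide (i ∈ A.1) = true).card = c
      have : (Finset.univ.filter fun i => decide (i ∈ A.1) = true) = A.1 := by
        ext i; simp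
      rw [this, A.2]
    · rintro ⟨s, hs⟩
      ext i
      simp
    · rintro ⟨A, hA⟩
      ext i
      simp
  rw [Nat.card_congr e, Nat.card_eq_fintype_card, Fintype.card_finset_len]
  simp

lemma icount_zero_one (n : ℕ) : icount 0 1 n = n.choose ((n + 1) / 2) := by
  unfold icount
  rw [cnt_congr (q := fun s => (Finset.univ.filter fun i => s i = true).card = (n + 1) / 2)]
  · exact cnt_card_eq n ((n + 1) / 2)
  · intro s
    rw [total_eq_card]
    omega

lemma gcount_zero (n : ℕ) : gcount 0 n = n.choose ((n + 1) / 2) := by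
  rw [gcount_eq_icount n 0, ← icount_zero_one n]
  push_cast
  rw [neg_zero]

lemma gcount_one (n : ℕ) : gcount 1 n = (n + 1).choose ((n + 2) / 2) := by
  rw [← gcount_zero_succ, gcount_zero]

/-- the central-ish binomial count -/
def A (n : ℕ) : ℕ := n.choose ((n + 1) / 2)

lemma gcount_zero' (n : ℕ) : gcount 0 n = A n := gcount_zero n
lemma gcount_one' (n : ℕ) : gcount 1 n = A (n + 1) := gcount_one n

lemma A_pos (n : ℕ) : 0 < A n := Nat.choose_pos (by omega)

/-- the key ratio identity: for `m ≥ 1` and `t = (m+2)/2`,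
`(2t-1) * (2 * A (m-1)) = t * A (m+1)`. -/
lemma key_identity (m : ℕ) (hm : 1 ≤ m) :
    (2 * ((m + 2) / 2) - 1) * (2 * A (m - 1)) = ((m + 2) / 2) * A (m + 1) := by
  rcases Nat.even_or_odd m with ⟨k, hk⟩ | ⟨k, hk⟩
  · -- m even, m = 2j+2
    obtain ⟨j, hj⟩ : ∃ j, m = 2 * j + 2 := ⟨k - 1, by omega⟩
    subst hj
    have ht : (2 * j + 2 + 2) / 2 = j + 2 := by omega
    have hm1 : 2 * j + 2 - 1 = 2 * j + 1 := by omega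
    have hd1 : (2 * j + 1 + 1) / 2 = j + 1 := by omega
    have hd2 : (2 * j + 2 + 1 + 1) / 2 = j + 2 := by omega
    rw [ht, hm1]
    unfold A
    rw [hd1, hd2, show 2 * (j + 2) - 1 = 2 * j + 3 from by omega,
      show 2 * j + 2 + 1 = 2 * j + 3 from by omega]
    -- goal: (2*j+3) * (2 * C(2j+1,j+1)) = (j+2) * C(2j+3,j+2)
    have i1 := Nat.add_one_mul_choose_eq (2 * j + 2) (j + 1)
    have i1' : (2 * j + 3) * (2 * j + 2).choose (j + 1)
        = (2 * j + 3).choose (j + 2) * (j + 2) := by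
      simpa [Nat.succ_eq_add_one, show 2 * j + 2 + 1 = 2 * j + 3 from by omega,
        show j + 1 + 1 = j + 2 from by omega] using i1
    have i2 := Nat.add_one_mul_choose_eq (2 * j + 1) j
    have i2' : (2 * j + 2) * (2 * j + 1).choose j
        = (2 * j + 2).choose (j + 1) * (j + 1) := by
      simpa [Nat.succ_eq_add_one, show 2 * j + 1 + 1 = 2 * j + 2 from by omega] using i2
    have i3 := Nat.choose_symm_half j
    rw [i3]
    apply Nat.eq_of_mul_eq_mul_right (show 0 < j + 1 by omega)
    calc ((2 * j + 3) * (2 * (2 * j + 1).choose j)) * (j + 1)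
        = (2 * j + 3) * ((2 * j + 2) * (2 * j + 1).choose j) := by ring
      _ = (2 * j + 3) * ((2 * j + 2).choose (j + 1) * (j + 1)) := by rw [i2']
      _ = ((2 * j + 3) * (2 * j + 2).choose (j + 1)) * (j + 1) := by ring
      _ = ((2 * j + 3).choose (j + 2) * (j + 2)) * (j + 1) := by rw [i1']
      _ = ((j + 2) * (2 * j + 3).choose (j + 2)) * (j + 1) := by ring
  · -- m odd, m = 2k+1
    subst hk
    have ht : (2 * k + 1 + 2) / 2 = k + 1 := by omega
    have hm1 : 2 * k + 1 - 1 = 2 * k := by omega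
    have hd1 : (2 * k + 1) / 2 = k := by omega
    have hd2 : (2 * k + 1 + 1 + 1) / 2 = k + 1 := by omega
    rw [ht, hm1]
    unfold A
    rw [hd1, hd2, show 2 * (k + 1) - 1 = 2 * k + 1 from by omega,
      show 2 * k + 1 + 1 = 2 * k + 2 from by omega]
    -- goal: (2*k+1) * (2 * C(2k,k)) = (k+1) * C(2k+2,k+1)
    have i1 := Nat.add_one_mul_choose_eq (2 * k + 1) k
    have i1' : (2 * k + 2) * (2 * k + 1).choose k
        = (2 * k + 2).choose (k + 1) * (k + 1) := by
      simpa [Nat.succ_eq_add_one, show 2 * k + 1 + 1 = 2 * k + 2 from by omega] using i1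
    have i2 := Nat.add_one_mul_choose_eq (2 * k) k
    have i2' : (2 * k + 1) * (2 * k).choose k
        = (2 * k + 1).choose (k + 1) * (k + 1) := by
      simpa [Nat.succ_eq_add_one, show 2 * k + 1 = 2 * k + 1 from rfl] using i2
    have i3 := Nat.choose_symm_half k
    apply Nat.eq_of_mul_eq_mul_right (show 0 < k + 1 by omega)
    calc ((2 * k + 1) * (2 * (2 * k).choose k)) * (k + 1)
        = 2 * (((2 * k + 1) * (2 * k).choose k) * (k + 1)) := by ring
      _ = 2 * (((2 * k + 1).choose (k + 1) * (k + 1)) * (k + 1)) := by rw [i2']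
      _ = ((2 * k + 2) * (2 * k + 1).choose (k + 1)) * (k + 1) := by ring
      _ = ((2 * k + 2) * (2 * k + 1).choose k) * (k + 1) := by rw [i3]
      _ = ((2 * k + 2).choose (k + 1) * (k + 1)) * (k + 1) := by rw [i1']
      _ = ((k + 1) * (2 * k + 2).choose (k + 1)) * (k + 1) := by ring


/-! ### hitTime characterizations -/

lemma lt_hitTime_iff {Ω : Type*} {Y : ℕ → Ω → ℤ} {l : ℤ} {ω : Ω} {m : ℕ} :
    (m : ℕ∞) < hitTime Y l ω ↔ ∀ k ≤ m, Y k ω ≠ l := by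
  constructor
  · intro h k hk hkl
    have hmem : (k : ℕ∞) ∈ (fun k : ℕ => (k : ℕ∞)) '' {k : ℕ | Y k ω = l} :=
      ⟨k, hkl, rfl⟩
    have := sInf_le hmem
    have hlt : (m : ℕ∞) < (k : ℕ∞) := lt_of_lt_of_le h this
    have : m < k := by exact_mod_cast hlt
    omega
  · intro h
    have hle : ((m + 1 : ℕ) : ℕ∞) ≤ hitTime Y l ω := by
      apply le_sInf
      rintro b ⟨k, hkl, rfl⟩
      have hk1 : m + 1 ≤ k := by
        by_contra hc
        exact h k (by omega) hkl
      show ((m + 1 : ℕ) : ℕ∞) ≤ ((k : ℕ) : ℕ∞)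
      exact_mod_cast hk1
    calc (m : ℕ∞) < ((m + 1 : ℕ) : ℕ∞) := by exact_mod_cast Nat.lt_succ_self m
      _ ≤ _ := hle

lemma hitTime_lt_iff {Ω : Type*} {Y : ℕ → Ω → ℤ} {l : ℤ} {ω : Ω} {m : ℕ} :
    hitTime Y l ω < (m : ℕ∞) ↔ ∃ k < m, Y k ω = l := by
  rw [hitTime, sInf_lt_iff]
  constructor
  · rintro ⟨b, ⟨k, hkl, rfl⟩, hb⟩
    have hb' : ((k : ℕ) : ℕ∞) < (m : ℕ∞) := hb
    exact ⟨k, by exact_mod_cast hb', hkl⟩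
  · rintro ⟨k, hk, hkl⟩
    exact ⟨(k : ℕ∞), ⟨k, hkl, rfl⟩, by exact_mod_cast hk⟩

/-! ### The probability bridge -/

section Bridge

variable {Ωp : Type*} [MeasurableSpace Ωp] (P : Measure Ωp) [IsProbabilityMeasure P]
  (X : ℕ → Ωp → ℤ)

lemma stepLaw_half_singleton (z : ℤ) (hz : z = 1 ∨ z = -1) :
    stepLaw (1 / 2) {z} = 2⁻¹ := by
  have h2 : ENNReal.ofReal (1 - 1 / 2 : ℝ) = 2⁻¹ := by
    rw [show (1 - 1/2 : ℝ) = 1/2 by norm_num, ENNReal.ofReal_div_of_pos two_pos]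
    simp
  have h1 : ENNReal.ofReal (1 / 2 : ℝ) = 2⁻¹ := by
    rw [ENNReal.ofReal_div_of_pos two_pos]; simp
  unfold stepLaw
  rw [Measure.add_apply, Measure.smul_apply, Measure.smul_apply,
    Measure.dirac_apply' _ ((Set.to_countable _).measurableSet), Measure.dirac_apply' _ ((Set.to_countable _).measurableSet), h1, h2]
  rcases hz with rfl | rfl
  · rw [Set.indicator_of_notMem (by norm_num), Set.indicator_of_mem (by norm_num)]
    simp
  · rw [Set.indicator_of_mem (by norm_num), Set.indicator_of_notMem (by norm_num)]
    simp

lemma stepLaw_half_other : stepLaw (1 / 2) {z : ℤ | z ≠ 1 ∧ z ≠ -1} = 0 := by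
  unfold stepLaw
  rw [Measure.add_apply, Measure.smul_apply, Measure.smul_apply,
    Measure.dirac_apply' _ ((Set.to_countable _).measurableSet), Measure.dirac_apply' _ ((Set.to_countable _).measurableSet)]
  rw [Set.indicator_of_notMem (by simp), Set.indicator_of_notMem (by norm_num)]
  simp

lemma prob_X_eq (hXmeas : ∀ i, Measurable (X i))
    (hXdist : ∀ i, Measure.map (X i) P = stepLaw (1 / 2))
    (i : ℕ) (s : Set ℤ) : P ((X i) ⁻¹' s) = stepLaw (1 / 2) s := by
  rw [← hXdist i, Measure.map_apply (hXmeas i) ((Set.to_countable _).measurableSet)]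

/-- the "bad" event where some of the first `m` steps is not `±1`. -/
def badSet (m : ℕ) : Set Ωp := ⋃ i : Fin m, (X i) ⁻¹' {z : ℤ | z ≠ 1 ∧ z ≠ -1}

lemma badSet_null (hXmeas : ∀ i, Measurable (X i))
    (hXdist : ∀ i, Measure.map (X i) P = stepLaw (1 / 2))
    (m : ℕ) : P (badSet X m) = 0 :=
  measure_iUnion_null fun i => by
    rw [prob_X_eq P X hXmeas hXdist]; exact stepLaw_half_other

lemma not_mem_badSet_iff {m : ℕ} {ω : Ωp} :
    ω ∉ badSet X m ↔ ∀ i : Fin m, X (i : ℕ) ω = 1 ∨ X (i : ℕ) ω = -1 := by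
  simp only [badSet, Set.mem_iUnion, not_exists, Set.mem_preimage, Set.mem_setOf_eq]
  constructor
  · intro h i
    have := h i
    tauto
  · intro h i
    have := h i
    tauto

/-- the cylinder event attached to a Boolean pattern. -/
def cylinder (m : ℕ) (s : Fin m → Bool) : Set Ωp :=
  ⋂ i ∈ Finset.range m, (X i) ⁻¹' {stepsOf s i}

lemma stepsOf_pm {n : ℕ} (s : Fin n → Bool) {i : ℕ} (h : i < n) :
    stepsOf s i = 1 ∨ stepsOf s i = -1 := by
  unfold stepsOf
  rw [dif_pos h]
  cases s ⟨i, h⟩ <;> simp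

lemma prob_cylinder (hXmeas : ∀ i, Measurable (X i))
    (hXdist : ∀ i, Measure.map (X i) P = stepLaw (1 / 2))
    (hXindep : iIndepFun X P)
    (m : ℕ) (s : Fin m → Bool) :
    P (cylinder X m s) = 2⁻¹ ^ m := by
  unfold cylinder
  rw [hXindep.meas_biInter (fun i _ => ⟨{stepsOf s i}, (Set.to_countable _).measurableSet, rfl⟩)]
  rw [Finset.prod_congr rfl (fun i hi => by
    rw [prob_X_eq P X hXmeas hXdist,
      stepLaw_half_singleton _ (stepsOf_pm s (Finset.mem_range.mp hi))])]
  rw [Finset.prod_const, Finset.card_range]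

lemma stepsOf_inj {n : ℕ} {s t : Fin n → Bool} {i : ℕ} (h : i < n)
    (he : stepsOf s i = stepsOf t i) : s ⟨i, h⟩ = t ⟨i, h⟩ := by
  unfold stepsOf at he
  rw [dif_pos h] at he
  rw [dif_pos h] at he
  cases hs1 : s ⟨i, h⟩ <;> cases ht1 : t ⟨i, h⟩ <;> rw [hs1, ht1] at he <;>
    first
    | rfl
    | exact absurd he (by norm_num)

/-- The key bridge: the probability of an event characterized on non-bad `ω` by a
pattern predicate equals the pattern count times `2⁻¹ ^ m`. -/
lemma prob_eq_cnt (hXmeas : ∀ i, Measurable (X i))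
    (hXdist : ∀ i, Measure.map (X i) P = stepLaw (1 / 2))
    (hXindep : iIndepFun X P)
    (m : ℕ) (p : (Fin m → Bool) → Prop) (T : Set Ωp)
    (hchar : ∀ ω : Ωp, (∀ i : Fin m, X (i : ℕ) ω = 1 ∨ X (i : ℕ) ω = -1) →
      (ω ∈ T ↔ p (fun i => decide (X (i : ℕ) ω = 1)))) :
    P T = (cnt m p : ℝ≥0∞) * 2⁻¹ ^ m := by
  classical
  have hfin : {s : Fin m → Bool | p s}.Finite := Set.toFinite _
  set F : Finset (Fin m → Bool) := hfin.toFinset with hF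
  have hdecomp : T \ badSet X m = ⋃ s ∈ F, cylinder X m s := by
    ext ω
    simp only [Set.mem_diff, Set.mem_iUnion]
    constructor
    · rintro ⟨hT, hN⟩
      have hall := (not_mem_badSet_iff X).mp hN
      refine ⟨fun i => decide (X (i : ℕ) ω = 1), ?_, ?_⟩
      · rw [hF, Set.Finite.mem_toFinset]
        exact (hchar ω hall).mp hT
      · unfold cylinder
        simp only [Set.mem_iInter, Set.mem_preimage, Set.mem_singleton_iff]
        intro i hi
        have him : i < m := Finset.mem_range.mp hi
        unfold stepsOf
        rw [dif_pos him]
        have h1 : X i ω = 1 ∨ X i ω = -1 := hall ⟨i, him⟩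
        show X i ω = if decide (X i ω = 1) = true then 1 else -1
        rcases h1 with h1 | h1 <;> rw [h1] <;> norm_num
    · rintro ⟨s, hsF, hcyl⟩
      unfold cylinder at hcyl
      simp only [Set.mem_iInter, Set.mem_preimage, Set.mem_singleton_iff] at hcyl
      have hall : ∀ i : Fin m, X (i : ℕ) ω = 1 ∨ X (i : ℕ) ω = -1 := by
        intro i
        have := hcyl (i : ℕ) (Finset.mem_range.mpr i.isLt)
        rw [this]
        exact stepsOf_pm s i.isLt
      have hseq : (fun i : Fin m => decide (X (i : ℕ) ω = 1)) = s := by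
        funext i
        have hi := hcyl (i : ℕ) (Finset.mem_range.mpr i.isLt)
        unfold stepsOf at hi
        rw [dif_pos i.isLt] at hi
        have : s ⟨(i : ℕ), i.isLt⟩ = s i := rfl
        rw [this] at hi
        cases hs : s i
        · rw [hs] at hi
          norm_num at hi
          rw [hi]
          rfl
        · rw [hs] at hi
          norm_num at hi
          rw [hi]
          rfl
      constructor
      · apply (hchar ω hall).mpr
        rw [hseq]
        rw [hF, Set.Finite.mem_toFinset] at hsF
        exact hsF
      · rw [not_mem_badSet_iff]
        exact hall
  have hmeas_cyl : ∀ s ∈ F, MeasurableSet (cylinder X m s) := by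
    intro s _
    unfold cylinder
    exact MeasurableSet.biInter (Set.to_countable _) fun i _ => (hXmeas i) ((Set.to_countable _).measurableSet)
  have hdisj : (F : Set (Fin m → Bool)).PairwiseDisjoint (cylinder X m) := by
    intro s _ t _ hst
    have : ∃ i : Fin m, s i ≠ t i := by
      by_contra hc
      push_neg at hc
      exact hst (funext hc)
    obtain ⟨i, hi⟩ := this
    rw [Function.onFun, Set.disjoint_left]
    intro ω hs ht
    unfold cylinder at hs ht
    simp only [Set.mem_iInter, Set.mem_preimage, Set.mem_singleton_iff] at hs ht
    have h1 := hs (i : ℕ) (Finset.mem_range.mpr i.isLt)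
    have h2 := ht (i : ℕ) (Finset.mem_range.mpr i.isLt)
    rw [h1] at h2
    exact hi (stepsOf_inj i.isLt h2)
  calc P T = P (T \ badSet X m) := (measure_diff_null (badSet_null P X hXmeas hXdist m)).symm
    _ = P (⋃ s ∈ F, cylinder X m s) := by rw [hdecomp]
    _ = ∑ s ∈ F, P (cylinder X m s) := measure_biUnion_finset hdisj hmeas_cyl
    _ = ∑ _s ∈ F, (2⁻¹ : ℝ≥0∞) ^ m := Finset.sum_congr rfl fun s _ =>
        prob_cylinder P X hXmeas hXdist hXindep m s
    _ = (F.card : ℝ≥0∞) * 2⁻¹ ^ m := by rw [Finset.sum_const, nsmul_eq_mul]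
    _ = (cnt m p : ℝ≥0∞) * 2⁻¹ ^ m := by
        rw [hF, ← Set.ncard_eq_toFinset_card _ hfin]
        rfl

end Bridge


/-! ### Pattern-level walk lemmas -/

lemma stepsOf_bounds {n : ℕ} (s : Fin n → Bool) (i : ℕ) :
    -1 ≤ stepsOf s i ∧ stepsOf s i ≤ 1 := by
  unfold stepsOf
  split_ifs <;> omega

lemma pA_iff {m : ℕ} (s : Fin m → Bool) :
    (∀ k ≤ m, (2 : ℤ) + ∑ i ∈ range k, stepsOf s i ≠ 0) ↔ walkPred 1 s := by
  constructor
  · intro h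
    have aux : ∀ k, k ≤ m → 1 ≤ (2 : ℤ) + ∑ i ∈ range k, stepsOf s i := by
      intro k
      induction k with
      | zero => intro _; simp
      | succ j ih =>
        intro hk
        have h1 := ih (by omega)
        have hs := stepsOf_bounds s j
        have h2 := h (j + 1) hk
        rw [Finset.sum_range_succ] at h2 ⊢
        omega
    intro k hk
    have := aux k hk
    push_cast
    omega
  · intro h k hk
    have := h k hk
    push_cast at this
    omega

lemma pC_iff {n : ℕ} (s : Fin n → Bool) :
    (∀ k ≤ n, (2 : ℤ) + ∑ i ∈ range k, stepsOf s i ≠ 1) ↔ walkPred 0 s := by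
  constructor
  · intro h
    have aux : ∀ k, k ≤ n → 2 ≤ (2 : ℤ) + ∑ i ∈ range k, stepsOf s i := by
      intro k
      induction k with
      | zero => intro _; simp
      | succ j ih =>
        intro hk
        have h1 := ih (by omega)
        have hs := stepsOf_bounds s j
        have h2 := h (j + 1) hk
        rw [Finset.sum_range_succ] at h2 ⊢
        omega
    intro k hk
    have := aux k hk
    push_cast
    omega
  · intro h k hk
    have := h k hk
    push_cast at this
    omega

lemma pC_imp_pA {m : ℕ} (hm : 1 ≤ m) (s : Fin m → Bool)
    (h : ∀ k < m, (2 : ℤ) + ∑ i ∈ range k, stepsOf s i ≠ 1) :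
    ∀ k ≤ m, (2 : ℤ) + ∑ i ∈ range k, stepsOf s i ≠ 0 := by
  have aux : ∀ k, k < m → 2 ≤ (2 : ℤ) + ∑ i ∈ range k, stepsOf s i := by
    intro k
    induction k with
    | zero => intro _; simp
    | succ j ih =>
      intro hk
      have h1 := ih (by omega)
      have hs := stepsOf_bounds s j
      have h2 := h (j + 1) hk
      rw [Finset.sum_range_succ] at h2 ⊢
      omega
  intro k hk
  rcases Nat.lt_or_ge k m with hkm | hkm
  · have := aux k hkm
    omega
  · obtain ⟨j, hj⟩ : ∃ j, m = j + 1 := ⟨m - 1, by omega⟩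
    have h1 := aux j (by omega)
    have hs := stepsOf_bounds s j
    have hkj : k = j + 1 := by omega
    subst hkj
    rw [Finset.sum_range_succ]
    omega

section Main

variable {Ωp : Type*} [MeasurableSpace Ωp] (P : Measure Ωp) [IsProbabilityMeasure P]
  (X : ℕ → Ωp → ℤ)

lemma sum_match {m : ℕ} {ω : Ωp}
    (hall : ∀ i : Fin m, X (i : ℕ) ω = 1 ∨ X (i : ℕ) ω = -1) {k : ℕ} (hk : k ≤ m) :
    ∑ i ∈ range k, X i ω
      = ∑ i ∈ range k, stepsOf (fun i : Fin m => decide (X (i : ℕ) ω = 1)) i := by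
  refine Finset.sum_congr rfl fun i hi => ?_
  have him : i < m := lt_of_lt_of_le (Finset.mem_range.mp hi) hk
  unfold stepsOf
  rw [dif_pos him]
  have h1 : X i ω = 1 ∨ X i ω = -1 := hall ⟨i, him⟩
  show X i ω = if decide (X i ω = 1) = true then 1 else -1
  rcases h1 with h1 | h1 <;> rw [h1] <;> norm_num

lemma walk_measurable (hXmeas : ∀ i, Measurable (X i)) (k : ℕ) :
    Measurable (walkFrom 2 X k) := by
  unfold walkFrom
  exact (Finset.measurable_sum _ fun i _ => hXmeas i).const_add 2

lemma measA (hXmeas : ∀ i, Measurable (X i)) (m : ℕ) :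
    MeasurableSet {ω : Ωp | (m : ℕ∞) < hitTime (walkFrom 2 X) 0 ω} := by
  have hset : {ω : Ωp | (m : ℕ∞) < hitTime (walkFrom 2 X) 0 ω}
      = ⋂ k, ⋂ (_ : k ≤ m), (walkFrom 2 X k) ⁻¹' {0}ᶜ := by
    ext ω
    simp only [Set.mem_setOf_eq, lt_hitTime_iff, Set.mem_iInter, Set.mem_preimage,
      Set.mem_compl_iff, Set.mem_singleton_iff]
  rw [hset]
  exact MeasurableSet.iInter fun k => MeasurableSet.iInter fun _ =>
    (walk_measurable X hXmeas k) ((measurableSet_singleton 0).compl)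

lemma measB (hXmeas : ∀ i, Measurable (X i)) (m : ℕ) :
    MeasurableSet {ω : Ωp | hitTime (walkFrom 2 X) 1 ω < (m : ℕ∞)} := by
  have hset : {ω : Ωp | hitTime (walkFrom 2 X) 1 ω < (m : ℕ∞)}
      = ⋃ k, ⋃ (_ : k < m), (walkFrom 2 X k) ⁻¹' {1} := by
    ext ω
    simp only [Set.mem_setOf_eq, hitTime_lt_iff, Set.mem_iUnion, Set.mem_preimage,
      Set.mem_singleton_iff, exists_prop]
  rw [hset]
  exact MeasurableSet.iUnion fun k => MeasurableSet.iUnion fun _ =>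
    (walk_measurable X hXmeas k) (measurableSet_singleton 1)

variable (hXmeas : ∀ i, Measurable (X i))
  (hXdist : ∀ i, Measure.map (X i) P = stepLaw (1 / 2))
  (hXindep : iIndepFun X P)

include hXmeas hXdist hXindep

lemma probA (m : ℕ) :
    P {ω : Ωp | (m : ℕ∞) < hitTime (walkFrom 2 X) 0 ω}
      = (A (m + 1) : ℝ≥0∞) * 2⁻¹ ^ m := by
  rw [prob_eq_cnt P X hXmeas hXdist hXindep m (fun s => walkPred 1 s) _ ?_]
  · rw [show cnt m (fun s => walkPred 1 s) = gcount 1 m from rfl, gcount_one']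
  · intro ω hall
    simp only [Set.mem_setOf_eq, lt_hitTime_iff]
    rw [← pA_iff]
    unfold walkFrom
    constructor
    · intro h k hk
      rw [← sum_match X hall hk]
      exact h k hk
    · intro h k hk
      rw [sum_match X hall hk]
      exact h k hk

lemma probBc (n : ℕ) :
    P {ω : Ωp | hitTime (walkFrom 2 X) 1 ω < ((n + 1 : ℕ) : ℕ∞)}ᶜ
      = (A n : ℝ≥0∞) * 2⁻¹ ^ n := by
  rw [prob_eq_cnt P X hXmeas hXdist hXindep n (fun s => walkPred 0 s) _ ?_]
  · rw [show cnt n (fun s => walkPred 0 s) = gcount 0 n from rfl, gcount_zero']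
  · intro ω hall
    simp only [Set.mem_compl_iff, Set.mem_setOf_eq, hitTime_lt_iff]
    push_neg
    rw [← pC_iff]
    unfold walkFrom
    constructor
    · intro h k hk
      rw [← sum_match X hall hk]
      exact h k (by omega)
    · intro h k hk
      rw [sum_match X hall (by omega : k ≤ n)]
      exact h k (by omega)

lemma probBcAc (n : ℕ) :
    P ({ω : Ωp | hitTime (walkFrom 2 X) 1 ω < ((n + 1 : ℕ) : ℕ∞)}ᶜ
        ∩ {ω : Ωp | ((n + 1 : ℕ) : ℕ∞) < hitTime (walkFrom 2 X) 0 ω}ᶜ) = 0 := by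
  apply measure_mono_null _ (badSet_null P X hXmeas hXdist (n + 1))
  intro ω hω
  by_contra hbad
  have hall := (not_mem_badSet_iff X).mp hbad
  obtain ⟨hBc, hAc⟩ := hω
  simp only [Set.mem_compl_iff, Set.mem_setOf_eq, hitTime_lt_iff, lt_hitTime_iff] at hBc hAc
  push_neg at hBc hAc
  obtain ⟨k, hk, hk0⟩ := hAc
  have hC : ∀ j < n + 1, (2 : ℤ) + ∑ i ∈ range j, stepsOf
      (fun i : Fin (n + 1) => decide (X (i : ℕ) ω = 1)) i ≠ 1 := by
    intro j hj
    rw [← sum_match X hall (by omega : j ≤ n + 1)]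
    exact fun hc => hBc j hj hc
  have hne := pC_imp_pA (by omega) _ hC k hk
  rw [← sum_match X hall hk] at hne
  exact hne hk0

end Main


/-! ### The limit -/

lemma tendsto_aux : Tendsto (fun m : ℕ =>
    ((((m + 2) / 2 - 1 : ℕ) : ℝ≥0∞)) / (((2 * ((m + 2) / 2) - 1 : ℕ) : ℝ≥0∞)))
    atTop (𝓝 (1 / 2 : ℝ≥0∞)) := by
  have hofr : (1 / 2 : ℝ≥0∞) = ENNReal.ofReal (1 / 2 : ℝ) := by
    rw [ENNReal.ofReal_div_of_pos two_pos]; simp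
  have hreal : Tendsto (fun j : ℕ => ((j : ℝ) - 1) / (2 * (j : ℝ) - 1)) atTop
      (𝓝 (1 / 2 : ℝ)) := by
    have h0 : Tendsto (fun j : ℕ => ((j : ℝ))⁻¹) atTop (𝓝 0) :=
      tendsto_inv_atTop_nhds_zero_nat
    have hnum : Tendsto (fun j : ℕ => 1 - ((j : ℝ))⁻¹) atTop (𝓝 1) := by
      simpa using tendsto_const_nhds.sub h0
    have hden : Tendsto (fun j : ℕ => 2 - ((j : ℝ))⁻¹) atTop (𝓝 2) := by
      simpa using tendsto_const_nhds.sub h0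
    have hdiv := hnum.div hden (by norm_num)
    have heq : ∀ᶠ j : ℕ in atTop,
        (1 - ((j : ℝ))⁻¹) / (2 - ((j : ℝ))⁻¹) = ((j : ℝ) - 1) / (2 * (j : ℝ) - 1) := by
      filter_upwards [eventually_ge_atTop 1] with j hj
      have hj0 : (j : ℝ) ≠ 0 := by
        have : (1 : ℝ) ≤ (j : ℝ) := by exact_mod_cast hj
        linarith
      have hj1 : (1 : ℝ) ≤ (j : ℝ) := by exact_mod_cast hj
      have hinv : ((j : ℝ))⁻¹ ≤ 1 := by
        rw [inv_le_one_iff₀]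
        right; exact hj1
      rw [div_eq_div_iff (by linarith) (by linarith)]
      field_simp
    exact Tendsto.congr' heq (by norm_num at hdiv; exact hdiv)
  have ht : Tendsto (fun m : ℕ => (m + 2) / 2) atTop atTop :=
    tendsto_atTop_atTop.mpr fun b => ⟨2 * b, fun a ha => by omega⟩
  have hcomp := (ENNReal.tendsto_ofReal (hreal.comp ht))
  rw [hofr]
  apply Tendsto.congr' _ hcomp
  apply Filter.Eventually.of_forall
  intro m
  show ENNReal.ofReal (((((m + 2) / 2 : ℕ) : ℝ) - 1) / (2 * (((m + 2) / 2 : ℕ) : ℝ) - 1)) = _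
  set j : ℕ := (m + 2) / 2 with hjs
  have hj1 : 1 ≤ j := by omega
  have hc1 : ((j - 1 : ℕ) : ℝ) = (j : ℝ) - 1 := by
    push_cast [hj1]
    ring
  have hc2 : ((2 * j - 1 : ℕ) : ℝ) = 2 * (j : ℝ) - 1 := by
    push_cast [show 1 ≤ 2 * j by omega]
    ring
  rw [← hc1, ← hc2, ENNReal.ofReal_div_of_pos (by exact_mod_cast (by omega : 0 < 2 * j - 1)),
    ENNReal.ofReal_natCast, ENNReal.ofReal_natCast]


/-- For the symmetric simple random walk started at `Y₀ = 2`, with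
`V_k` the first hitting time of level `k`, the conditional probability
`P₂(V₁ < m | V₀ > m)` converges to `1/2` as `m → ∞`. -/
theorem cond_hitting_prob_symmetric
    {Ωp : Type*} [MeasurableSpace Ωp] (P : Measure Ωp) [IsProbabilityMeasure P]
    (X : ℕ → Ωp → ℤ) (hXmeas : ∀ i, Measurable (X i))
    (hXdist : ∀ i, Measure.map (X i) P = stepLaw (1 / 2))
    (hXindep : iIndepFun X P) :
    Tendsto
      (fun m : ℕ =>
        ProbabilityTheory.cond P {ω | (m : ℕ∞) < hitTime (walkFrom 2 X) 0 ω}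
          {ω | hitTime (walkFrom 2 X) 1 ω < (m : ℕ∞)})
      atTop (𝓝 (1 / 2 : ENNReal)) := by
  apply Tendsto.congr' _ tendsto_aux
  filter_upwards [eventually_ge_atTop 1] with m hm
  obtain ⟨n, rfl⟩ : ∃ n, m = n + 1 := ⟨m - 1, by omega⟩
  -- notation for the events
  set SA : Set Ωp := {ω | ((n + 1 : ℕ) : ℕ∞) < hitTime (walkFrom 2 X) 0 ω} with hSA
  set SB : Set Ωp := {ω | hitTime (walkFrom 2 X) 1 ω < ((n + 1 : ℕ) : ℕ∞)} with hSB
  -- nat-level facts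
  set t : ℕ := (n + 1 + 2) / 2 with hts
  have ht1 : 1 ≤ t := by omega
  have khey : (2 * t - 1) * (2 * A n) = t * A (n + 2) := by
    have h1 := key_identity (n + 1) (by omega)
    have e1 : n + 1 - 1 = n := rfl
    have e2 : n + 1 + 1 = n + 2 := rfl
    rw [e1, e2, ← hts] at h1
    exact h1
  have hApos := A_pos (n + 2)
  have hvu : 2 * A n ≤ A (n + 2) := by
    have h1 : t * (2 * A n) ≤ (2 * t - 1) * (2 * A n) :=
      Nat.mul_le_mul_right _ (by omega)
    rw [khey] at h1
    exact Nat.le_of_mul_le_mul_left h1 (by omega)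
  have hw : (2 * t - 1) * (A (n + 2) - 2 * A n) = (t - 1) * A (n + 2) := by
    rw [Nat.mul_sub, khey, ← Nat.sub_mul]
    congr 1
    omega
  -- ENNReal constants
  have hc0 : (2⁻¹ : ℝ≥0∞) ^ (n + 1) ≠ 0 :=
    pow_ne_zero _ (ENNReal.inv_ne_zero.mpr (by norm_num))
  have hcT : (2⁻¹ : ℝ≥0∞) ^ (n + 1) ≠ ⊤ :=
    ENNReal.pow_ne_top (ENNReal.inv_ne_top.mpr (by norm_num))
  have hu0 : (A (n + 2) : ℝ≥0∞) ≠ 0 := Nat.cast_ne_zero.mpr (by omega)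
  have huT : (A (n + 2) : ℝ≥0∞) ≠ ⊤ := ENNReal.natCast_ne_top _
  -- probabilities
  have hu : P SA = (A (n + 2) : ℝ≥0∞) * 2⁻¹ ^ (n + 1) := by
    rw [hSA]
    have := probA P X hXmeas hXdist hXindep (n + 1)
    rw [show n + 1 + 1 = n + 2 from rfl] at this
    exact this
  have hv : P SBᶜ = ((2 * A n : ℕ) : ℝ≥0∞) * 2⁻¹ ^ (n + 1) := by
    rw [hSB]
    have h1 := probBc P X hXmeas hXdist hXindep n
    rw [h1]
    have h2 : (2 : ℝ≥0∞) * 2⁻¹ = 1 := ENNReal.mul_inv_cancel (by norm_num) (by norm_num)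
    push_cast
    rw [pow_succ]
    calc (A n : ℝ≥0∞) * 2⁻¹ ^ n = (A n : ℝ≥0∞) * 2⁻¹ ^ n * (2 * 2⁻¹) := by rw [h2, mul_one]
      _ = 2 * (A n : ℝ≥0∞) * (2⁻¹ ^ n * 2⁻¹) := by ring
  -- P (SA ∩ SB) = P SA - P SBᶜ
  have hBmeas : MeasurableSet SB := measB X hXmeas (n + 1)
  have hAmeas : MeasurableSet SA := measA X hXmeas (n + 1)
  have e1 : P (SA ∩ SB) + P (SA \ SB) = P SA := measure_inter_add_diff SA hBmeas
  have e2 : P (SBᶜ ∩ SA) + P (SBᶜ \ SA) = P SBᶜ := measure_inter_add_diff SBᶜ hAmeas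
  have e3 : P (SBᶜ \ SA) = 0 := by
    rw [Set.diff_eq]
    exact probBcAc P X hXmeas hXdist hXindep n
  have e4 : P (SA \ SB) = P SBᶜ := by
    rw [← e2, e3, add_zero, Set.diff_eq, Set.inter_comm]
  have e5 : P (SA ∩ SB) + P SBᶜ = P SA := by rw [← e4]; exact e1
  have hApB : P (SA ∩ SB) = ((A (n + 2) - 2 * A n : ℕ) : ℝ≥0∞) * 2⁻¹ ^ (n + 1) := by
    have h6 : P (SA ∩ SB) = P SA - P SBᶜ :=
      ENNReal.eq_sub_of_add_eq (by rw [hv]; exact ENNReal.mul_ne_top (ENNReal.natCast_ne_top _) hcT) e5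
    rw [h6, hu, hv, ← ENNReal.sub_mul (fun _ _ => hcT), ENNReal.natCast_sub]
  -- compute the conditional probability
  rw [cond_apply hAmeas P, hApB, hu]
  rw [ENNReal.mul_inv (Or.inl hu0) (Or.inr hc0)]
  set w : ℝ≥0∞ := ((A (n + 2) - 2 * A n : ℕ) : ℝ≥0∞) with hws
  set u : ℝ≥0∞ := (A (n + 2) : ℝ≥0∞) with hus
  set c : ℝ≥0∞ := (2⁻¹ : ℝ≥0∞) ^ (n + 1) with hcs
  have hstep : u⁻¹ * c⁻¹ * (w * c) = w / u := by
    calc u⁻¹ * c⁻¹ * (w * c) = w * u⁻¹ * (c⁻¹ * c) := by ring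
      _ = w * u⁻¹ := by rw [ENNReal.inv_mul_cancel hc0 hcT, mul_one]
      _ = w / u := (div_eq_mul_inv w u).symm
  rw [hstep]
  have ha0 : ((2 * t - 1 : ℕ) : ℝ≥0∞) ≠ 0 := Nat.cast_ne_zero.mpr (by omega)
  have haT : ((2 * t - 1 : ℕ) : ℝ≥0∞) ≠ ⊤ := ENNReal.natCast_ne_top _
  symm
  rw [ENNReal.div_eq_div_iff ha0 haT hu0 huT]
  rw [hws, hus, ← Nat.cast_mul, ← Nat.cast_mul]
  exact congrArg _ (hw.trans (Nat.mul_comm _ _))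

end TASEP

-- #print axioms check
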